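/- Let v ∈ ℝ^n be a nonzero vector. Then there exists a nonempty subset S ⊆ {1,...,n} such that |S| ≥ ‖v‖₁/(2‖v‖∞) and |S| · min_{i∈S} |v_i| ≥ ‖v‖₁/(2(1 + ln n)). -/

import Mathlib

open Finset

/-- Let `v ∈ ℝ^n` be a nonzero vector. Then there is a nonempty subset `S ⊆ {1,...,n}` with
`|S| ≥ ‖v‖₁/(2‖v‖∞)` and `|S| · min_{i∈S} |v_i| ≥ ‖v‖₁/(2(1 + ln n))`. -/
theorem stmt_3 (n : ℕ) (hn : 1 ≤ n) (v : Fin n → ℝ) (hv : v ≠ 0) :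
    ∃ S : Finset (Fin n), S.Nonempty ∧
      (∑ i, |v i|) / (2 * ⨆ i, |v i|) ≤ (S.card : ℝ) ∧
      (∑ i, |v i|) / (2 * (1 + Real.log n)) ≤ (S.card : ℝ) * ⨅ i : S, |v i.1| := by
  classical
  have hne : Nonempty (Fin n) := ⟨⟨0, hn⟩⟩
  set f : Fin n → ℝ := fun i => |v i| with hfdef
  have hf0 : ∀ i, 0 ≤ f i := fun i => abs_nonneg _
  set L : ℝ := ∑ i, f i with hL
  set M : ℝ := ⨆ i, |v i| with hM
  obtain ⟨i0, hi0⟩ : ∃ i, v i ≠ 0 := by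
    by_contra h; push_neg at h; exact hv (funext h)
  have hbdd : BddAbove (Set.range f) := (Set.finite_range f).bddAbove
  have hfM : ∀ i, f i ≤ M := fun i => le_ciSup hbdd i
  have hM0 : 0 < M := lt_of_lt_of_le (abs_pos.mpr hi0) (hfM i0)
  have hL0 : 0 < L :=
    Finset.sum_pos' (fun i _ => hf0 i) ⟨i0, Finset.mem_univ _, abs_pos.mpr hi0⟩
  set H : ℝ := 1 + Real.log n with hH
  have hH1 : (1 : ℝ) ≤ H :=
    le_add_of_nonneg_right (Real.log_nonneg (by exact_mod_cast hn))
  have hH0 : (0 : ℝ) < H := lt_of_lt_of_le one_pos hH1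
  set σ := Tuple.sort f with hσ
  set g : Fin n → ℝ := f ∘ σ with hg
  have hmono : Monotone g := Tuple.monotone_sort f
  have hsum : ∑ j, g j = L := Equiv.sum_comp σ f
  have hgM : ∀ j, g j ≤ M := fun j => hfM _
  have hg0 : ∀ j, 0 ≤ g j := fun j => hf0 _
  -- key: exists j with (n - j) large and (n - j) * g j large
  have key : ∃ j : Fin n, L / (2 * M) ≤ ((n - (j : ℕ) : ℕ) : ℝ) ∧
      L / (2 * H) ≤ ((n - (j : ℕ) : ℕ) : ℝ) * g j := by
    by_contra hcon
    push_neg at hcon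
    set c : ℝ := L / (2 * M) with hc
    have hc0 : 0 < c := div_pos hL0 (by positivity)
    set A : Finset (Fin n) := Finset.univ.filter (fun j => ((n - (j : ℕ) : ℕ) : ℝ) < c) with hA
    set B : Finset (Fin n) := Finset.univ.filter (fun j => ¬ ((n - (j : ℕ) : ℕ) : ℝ) < c) with hB
    have hsplit : ∑ j ∈ A, g j + ∑ j ∈ B, g j = L := by
      rw [← hsum]
      exact Finset.sum_filter_add_sum_filter_not _ _ _
    -- bound on A
    have hAcard : (A.card : ℝ) < c := by
      have hsub : ∀ j ∈ A, n - 1 - (j : ℕ) ∈ Finset.range (⌈c⌉₊ - 1) := by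
        intro j hj
        simp only [hA, Finset.mem_filter] at hj
        have h1 : (n - (j : ℕ)) < ⌈c⌉₊ := Nat.lt_ceil.mpr hj.2
        have h2 : (j : ℕ) < n := j.2
        have h3 : 1 ≤ ⌈c⌉₊ := Nat.one_le_ceil_iff.mpr hc0
        simp only [Finset.mem_range]
        omega
      have hinj : Set.InjOn (fun j : Fin n => n - 1 - (j : ℕ)) A := by
        intro a ha b hb hab
        have hab' : n - 1 - (a : ℕ) = n - 1 - (b : ℕ) := hab
        have ha2 : (a : ℕ) < n := a.2
        have hb2 : (b : ℕ) < n := b.2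
        exact Fin.ext (by omega)
      have hcard : A.card ≤ ⌈c⌉₊ - 1 := by
        simpa using Finset.card_le_card_of_injOn _ hsub hinj
      have h4 : ((⌈c⌉₊ - 1 : ℕ) : ℝ) < c := by
        have h3 : 1 ≤ ⌈c⌉₊ := Nat.one_le_ceil_iff.mpr hc0
        have := Nat.ceil_lt_add_one hc0.le
        push_cast [h3]
        linarith
      calc (A.card : ℝ) ≤ ((⌈c⌉₊ - 1 : ℕ) : ℝ) := by exact_mod_cast hcard
        _ < c := h4
    have hAsum : ∑ j ∈ A, g j < L / 2 := by
      have h1 : ∑ j ∈ A, g j ≤ A.card • M :=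
        Finset.sum_le_card_nsmul A g M (fun j _ => hgM j)
      rw [nsmul_eq_mul] at h1
      have h2 : (A.card : ℝ) * M < c * M := by
        exact mul_lt_mul_of_pos_right hAcard hM0
      have h3 : c * M = L / 2 := by
        field_simp [hc]
        rw [hc, div_mul_eq_mul_div, div_mul_eq_mul_div, div_eq_iff (by positivity)]
        ring
      linarith
    -- bound on B
    have hBsum : ∑ j ∈ B, g j ≤ L / 2 := by
      have hpt : ∀ j ∈ B, g j ≤ L / (2 * H) * ((n - (j : ℕ) : ℕ) : ℝ)⁻¹ := by
        intro j hj
        simp only [hB, Finset.mem_filter] at hj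
        have hjc : c ≤ ((n - (j : ℕ) : ℕ) : ℝ) := not_lt.mp hj.2
        have hstrict := hcon j hjc
        have hpos : (0 : ℝ) < ((n - (j : ℕ) : ℕ) : ℝ) := lt_of_lt_of_le hc0 hjc
        rw [mul_comm, inv_mul_eq_div, le_div_iff₀ hpos]
        nlinarith [hstrict]
      have h1 : ∑ j ∈ B, g j ≤ ∑ j ∈ B, L / (2 * H) * ((n - (j : ℕ) : ℕ) : ℝ)⁻¹ :=
        Finset.sum_le_sum hpt
      have h2 : ∑ j ∈ B, L / (2 * H) * ((n - (j : ℕ) : ℕ) : ℝ)⁻¹ ≤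
          ∑ j : Fin n, L / (2 * H) * ((n - (j : ℕ) : ℕ) : ℝ)⁻¹ := by
        apply Finset.sum_le_sum_of_subset_of_nonneg (Finset.subset_univ B)
        intro j _ _
        positivity
      have h3 : ∑ j : Fin n, ((n - (j : ℕ) : ℕ) : ℝ)⁻¹ = (harmonic n : ℝ) := by
        rw [Fin.sum_univ_eq_sum_range (fun k => ((n - k : ℕ) : ℝ)⁻¹) n]
        rw [show (harmonic n : ℝ) = ∑ k ∈ Finset.range n, ((k + 1 : ℕ) : ℝ)⁻¹ by
          simp [harmonic]]
        rw [← Finset.sum_range_reflect (fun k => ((k + 1 : ℕ) : ℝ)⁻¹) n]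
        apply Finset.sum_congr rfl
        intro k hk
        rw [Finset.mem_range] at hk
        congr 2
        omega
      have h4 : (harmonic n : ℝ) ≤ H := harmonic_le_one_add_log n
      have h5 : ∑ j : Fin n, L / (2 * H) * ((n - (j : ℕ) : ℕ) : ℝ)⁻¹
          = L / (2 * H) * (harmonic n : ℝ) := by
        rw [← Finset.mul_sum, h3]
      have h6 : L / (2 * H) * (harmonic n : ℝ) ≤ L / (2 * H) * H := by
        apply mul_le_mul_of_nonneg_left h4
        positivity
      have h7 : L / (2 * H) * H = L / 2 := by
        field_simp
      linarith
    linarith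
  obtain ⟨j, hj1, hj2⟩ := key
  set t : ℝ := g j with ht
  set S : Finset (Fin n) := Finset.univ.filter (fun i => t ≤ f i) with hS
  -- card bound
  have hcardS : ((n - (j : ℕ) : ℕ) : ℝ) ≤ (S.card : ℝ) := by
    have hsub : (Finset.Ici j).image σ ⊆ S := by
      intro i hi
      simp only [Finset.mem_image, Finset.mem_Ici] at hi
      obtain ⟨j', hj', rfl⟩ := hi
      simp only [hS, Finset.mem_filter, Finset.mem_univ, true_and]
      exact hmono hj'
    have hcard : ((Finset.Ici j).image σ).card = n - (j : ℕ) := by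
      rw [Finset.card_image_of_injective _ σ.injective, Fin.card_Ici]
    have := Finset.card_le_card hsub
    rw [hcard] at this
    exact_mod_cast this
  have hSne : S.Nonempty := by
    rw [← Finset.card_pos]
    have h1 : (0 : ℝ) < ((n - (j : ℕ) : ℕ) : ℝ) :=
      lt_of_lt_of_le (div_pos hL0 (by positivity)) hj1
    have h2 : (0 : ℝ) < (S.card : ℝ) := lt_of_lt_of_le h1 hcardS
    exact_mod_cast h2
  refine ⟨S, hSne, ?_, ?_⟩
  · exact le_trans hj1 hcardS
  · haveI : Nonempty ↥S := ⟨⟨hSne.choose, hSne.choose_spec⟩⟩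
    have hinf : t ≤ ⨅ i : S, |v i.1| := by
      apply le_ciInf
      intro i
      have := i.2
      simp only [hS, Finset.mem_filter] at this
      exact this.2
    have ht0 : 0 ≤ t := hg0 j
    calc L / (2 * H) ≤ ((n - (j : ℕ) : ℕ) : ℝ) * t := hj2
      _ ≤ (S.card : ℝ) * t := mul_le_mul_of_nonneg_right hcardS ht0
      _ ≤ (S.card : ℝ) * ⨅ i : S, |v i.1| :=
        mul_le_mul_of_nonneg_left hinf (Nat.cast_nonneg _)
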